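/- Let G and H be two nonempty subsets of a metric space (E,σ) such that G is complete and (G,H) has property strongly UC, and let T be a cyclic contraction on G ∪ H. Then there exists a unique u ∈ G such that σ(u,Tu) = σ(G,H). -/

import Mathlib

open Metric Filter Set

/-- Distance between two sets: `σ(G,H) = inf {σ(u,v) : u ∈ G, v ∈ H}`. -/
noncomputable def setDist {E : Type*} [MetricSpace E] (G H : Set E) : ℝ :=
  sInf (Set.image2 dist G H)

/-- The pair `(G,H)` has property UC. -/
def PropUC {E : Type*} [MetricSpace E] (G H : Set E) : Prop :=
  ∀ u z v : ℕ → E, (∀ n, u n ∈ G) → (∀ n, z n ∈ G) → (∀ n, v n ∈ H) →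
    Tendsto (fun n => dist (u n) (v n)) atTop (nhds (setDist G H)) →
    Tendsto (fun n => dist (z n) (v n)) atTop (nhds (setDist G H)) →
    Tendsto (fun n => dist (u n) (z n)) atTop (nhds 0)

/-- The pair `(G,H)` has property strongly UC. -/
def PropSUC {E : Type*} [MetricSpace E] (G H : Set E) : Prop :=
  ∀ u z v : ℕ → E, (∀ n, u n ∈ G) → (∀ n, z n ∈ G) → (∀ n, v n ∈ H) →
    Tendsto (fun n => dist (u n) (v n) - Metric.infDist (v n) G) atTop (nhds 0) →
    Tendsto (fun n => dist (z n) (v n) - Metric.infDist (v n) G) atTop (nhds 0) →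
    Tendsto (fun n => dist (u n) (z n)) atTop (nhds 0)

/-- `T` is a cyclic contraction on `G ∪ H`: it is cyclic and there is `β ∈ [0,1)` with
`σ(Tu,Tv) ≤ β·σ(u,v) + (1−β)·σ(G,H)` for all `u ∈ G`, `v ∈ H`. -/
def CyclicContraction {E : Type*} [MetricSpace E] (G H : Set E) (T : E → E) : Prop :=
  Set.MapsTo T G H ∧ Set.MapsTo T H G ∧
    ∃ β : ℝ, 0 ≤ β ∧ β < 1 ∧ ∀ u ∈ G, ∀ v ∈ H,
      dist (T u) (T v) ≤ β * dist u v + (1 - β) * setDist G H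

/-- If `G` is complete, `(G,H)` has property strongly UC, and `T` is a cyclic
contraction on `G ∪ H`, then there is a unique `u ∈ G` with `σ(u,Tu) = σ(G,H)`. -/
theorem bestProximityPoint_cyclicContraction {E : Type*} [MetricSpace E]
    (G H : Set E) (hG : G.Nonempty) (hH : H.Nonempty)
    (hGcomp : IsComplete G) (hSUC : PropSUC G H)
    (T : E → E) (hT : CyclicContraction G H T) :
    ∃! u, u ∈ G ∧ dist u (T u) = setDist G H := by
  obtain ⟨hTGH, hTHG, β, hβ0, hβ1, hC⟩ := hT
  set d := setDist G H with hdDef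
  -- basic facts about d
  have hd_le : ∀ u ∈ G, ∀ v ∈ H, d ≤ dist u v := by
    intro u hu v hv
    refine csInf_le ⟨0, ?_⟩ (Set.mem_image2_of_mem hu hv)
    rintro r ⟨a, _, b, _, rfl⟩
    exact dist_nonneg
  have hd0 : 0 ≤ d := by
    obtain ⟨u, hu⟩ := hG
    obtain ⟨v, hv⟩ := hH
    refine le_csInf ⟨dist u v, Set.mem_image2_of_mem hu hv⟩ ?_
    rintro r ⟨a, _, b, _, rfl⟩
    exact dist_nonneg
  have hd_inf : ∀ v ∈ H, d ≤ infDist v G := by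
    intro v hv
    rw [Metric.infDist_eq_iInf]
    have : Nonempty ↥G := hG.to_subtype
    exact le_ciInf fun z => by rw [dist_comm]; exact hd_le z z.2 v hv
  -- the orbit
  obtain ⟨x0, hx0⟩ := hG
  set x : ℕ → E := fun n => T^[2*n] x0 with hxDef
  set y : ℕ → E := fun n => T^[2*n+1] x0 with hyDef
  have hyx : ∀ n, y n = T (x n) := fun n =>
    Function.iterate_succ_apply' T (2*n) x0
  have hxy : ∀ n, x (n+1) = T (y n) := by
    intro n
    show T^[2*(n+1)] x0 = T (T^[2*n+1] x0)
    rw [show 2*(n+1) = (2*n+1)+1 by omega]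
    exact Function.iterate_succ_apply' T (2*n+1) x0
  have hmem : ∀ n, x n ∈ G ∧ y n ∈ H := by
    intro n
    induction n with
    | zero =>
      have hx : x 0 ∈ G := by simpa [hxDef] using hx0
      exact ⟨hx, (hyx 0) ▸ hTGH hx⟩
    | succ n ih =>
      have hx : x (n+1) ∈ G := (hxy n) ▸ hTHG ih.2
      exact ⟨hx, (hyx (n+1)) ▸ hTGH hx⟩
  have hxG : ∀ n, x n ∈ G := fun n => (hmem n).1
  have hyH : ∀ n, y n ∈ H := fun n => (hmem n).2
  -- boundedness constants
  obtain ⟨D, hDdef⟩ : ∃ D : ℝ, D = dist (x 0) (y 0) := ⟨_, rfl⟩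
  have hD0 : 0 ≤ D := hDdef ▸ dist_nonneg
  have hβ2 : β^2 < 1 := by nlinarith
  have hβ2' : (0:ℝ) < 1 - β^2 := by linarith
  obtain ⟨Q, hQdef⟩ : ∃ Q : ℝ, Q = (2*D + 2*d) / (1 - β^2) + D := ⟨_, rfl⟩
  have hQD : D ≤ Q := by
    rw [hQdef]
    have : 0 ≤ (2*D + 2*d) / (1 - β^2) := div_nonneg (by linarith) (le_of_lt hβ2')
    linarith
  have hQ0 : 0 ≤ Q := le_trans hD0 hQD
  have hQeq : (1 - β^2) * Q = 2*D + 2*d + (1 - β^2)*D := by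
    rw [hQdef]
    field_simp
  -- y 0 = T (x 0) so dist (x 1) (y 0) etc. obey the contraction
  -- q_k := dist (x 0) (y k) ≤ Q
  have hq : ∀ k, dist (x 0) (y k) ≤ Q := by
    intro k
    induction k with
    | zero => exact hDdef ▸ hQD
    | succ k ih =>
      have h10 : dist (x 1) (y 0) ≤ β * dist (x 0) (y 0) + (1-β)*d := by
        rw [hxy 0, hyx 0, dist_comm]
        exact hC (x 0) (hxG 0) (y 0) (hyH 0)
      have hk0 : dist (x (k+1)) (y 0) ≤ β * dist (x 0) (y k) + (1-β)*d := by
        rw [hxy k, hyx 0, dist_comm]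
        exact hC (x 0) (hxG 0) (y k) (hyH k)
      have h1k : dist (x 1) (y (k+1)) ≤ β * dist (x (k+1)) (y 0) + (1-β)*d := by
        rw [hxy 0, hyx (k+1), dist_comm]
        exact hC (x (k+1)) (hxG (k+1)) (y 0) (hyH 0)
      have htri : dist (x 0) (y (k+1)) ≤
          dist (x 0) (y 0) + dist (y 0) (x 1) + dist (x 1) (y (k+1)) :=
        dist_triangle4 _ _ _ _
      have hcomm : dist (y 0) (x 1) = dist (x 1) (y 0) := dist_comm _ _
      nlinarith [mul_le_mul_of_nonneg_left hk0 hβ0, hDdef, hQeq]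
  -- p_k := dist (x k) (y 0) ≤ Q + d =: K
  obtain ⟨K, hKdef⟩ : ∃ K : ℝ, K = Q + d := ⟨_, rfl⟩
  have hK0 : 0 ≤ K := by linarith
  have hp : ∀ k, dist (x k) (y 0) ≤ K := by
    intro k
    cases k with
    | zero => rw [hKdef, ← hDdef]; linarith [hQD]
    | succ k =>
      have hk0 : dist (x (k+1)) (y 0) ≤ β * dist (x 0) (y k) + (1-β)*d := by
        rw [hxy k, hyx 0, dist_comm]
        exact hC (x 0) (hxG 0) (y k) (hyH k)
      rw [hKdef]
      nlinarith [hq k]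
  -- main geometric bound: for m ≥ n, dist (x m) (y n) ≤ d + β^(2n) * K
  have hB : ∀ n m, n ≤ m → dist (x m) (y n) ≤ d + β^(2*n) * K := by
    intro n
    induction n with
    | zero =>
      intro m _
      have h := hp m
      have he : β ^ (2*0) = 1 := by norm_num
      rw [he]
      linarith
    | succ n ih =>
      intro m hm
      obtain ⟨m', rfl⟩ : ∃ m', m = m' + 1 := ⟨m - 1, by omega⟩
      have hm' : n ≤ m' := by omega
      have h1 : dist (x (m'+1)) (y (n+1)) ≤ β * dist (x (n+1)) (y m') + (1-β)*d := by
        rw [hxy m', hyx (n+1), dist_comm]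
        exact hC (x (n+1)) (hxG (n+1)) (y m') (hyH m')
      have h2 : dist (x (n+1)) (y m') ≤ β * dist (x m') (y n) + (1-β)*d := by
        rw [hxy n, hyx m', dist_comm]
        exact hC (x m') (hxG m') (y n) (hyH n)
      have h3 := ih m' hm'
      have hpow : β^(2*(n+1)) = β^2 * β^(2*n) := by ring
      rw [hpow]
      nlinarith [mul_le_mul_of_nonneg_left h2 hβ0, mul_le_mul_of_nonneg_left h3
        (mul_nonneg hβ0 hβ0), pow_nonneg hβ0 (2*n)]
  -- the gap sequences tend to 0
  have hpow0 : Tendsto (fun n : ℕ => β^(2*n) * K) atTop (nhds 0) := by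
    have h1 : Tendsto (fun n : ℕ => (β^2)^n) atTop (nhds 0) :=
      tendsto_pow_atTop_nhds_zero_of_lt_one (by positivity) hβ2
    have h2 : Tendsto (fun n : ℕ => (β^2)^n * K) atTop (nhds 0) := by
      simpa using h1.mul_const K
    convert h2 using 2 with n
    rw [← pow_mul]
  have hgap : ∀ f : ℕ → ℕ, (∀ n, n ≤ f n) →
      Tendsto (fun n => dist (x (f n)) (y n) - infDist (y n) G) atTop (nhds 0) := by
    intro f hf
    refine squeeze_zero (fun n => ?_) (fun n => ?_) hpow0
    · have : infDist (y n) G ≤ dist (x (f n)) (y n) := by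
        rw [dist_comm]
        exact infDist_le_dist_of_mem (hxG (f n))
      linarith
    · have h1 := hB n (f n) (hf n)
      have h2 := hd_inf (y n) (hyH n)
      linarith
  -- x is Cauchy
  have hcauchy : CauchySeq x := by
    rw [Metric.cauchySeq_iff]
    by_contra hnot
    push_neg at hnot
    obtain ⟨ε, hε, hcon⟩ := hnot
    choose m hm k hk hmk using hcon
    have h1 := hgap m hm
    have h2 := hgap k hk
    have h3 := hSUC (fun n => x (m n)) (fun n => x (k n)) y
      (fun n => hxG (m n)) (fun n => hxG (k n)) hyH h1 h2
    have : ε ≤ 0 := ge_of_tendsto h3 (Eventually.of_forall hmk)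
    linarith
  -- limit point
  obtain ⟨u, huG, hconv⟩ := cauchySeq_tendsto_of_isComplete hGcomp hxG hcauchy
  have hdistu : Tendsto (fun n => dist u (x n)) atTop (nhds 0) := by
    have := tendsto_iff_dist_tendsto_zero.mp hconv
    simpa [dist_comm] using this
  -- dist u (T u) = d
  have hud : dist u (T u) = d := by
    have hle : dist u (T u) ≤ d := by
      have hbnd : ∀ n : ℕ, dist u (T u) ≤
          dist u (x (n+1)) + (β * (dist u (x n) + (d + β^(2*n) * K)) + (1-β)*d) := by
        intro n
        have h1 : dist (x (n+1)) (T u) ≤ β * dist u (y n) + (1-β)*d := by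
          rw [hxy n, dist_comm]
          exact hC u huG (y n) (hyH n)
        have h2 : dist u (y n) ≤ dist u (x n) + dist (x n) (y n) := dist_triangle _ _ _
        have h3 := hB n n le_rfl
        have htri : dist u (T u) ≤ dist u (x (n+1)) + dist (x (n+1)) (T u) :=
          dist_triangle _ _ _
        have h2' : dist u (y n) ≤ dist u (x n) + (d + β^(2*n) * K) := by linarith
        nlinarith [mul_le_mul_of_nonneg_left h2' hβ0]
      have hlim : Tendsto (fun n : ℕ =>
          dist u (x (n+1)) + (β * (dist u (x n) + (d + β^(2*n) * K)) + (1-β)*d)) atTop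
          (nhds (0 + (β * (0 + (d + 0)) + (1-β)*d))) := by
        apply Tendsto.add
        · exact hdistu.comp (tendsto_add_atTop_nat 1)
        · apply Tendsto.add
          · exact (hdistu.add (tendsto_const_nhds.add hpow0)).const_mul β
          · exact tendsto_const_nhds
        
      have := ge_of_tendsto hlim (Eventually.of_forall hbnd)
      calc dist u (T u) ≤ 0 + (β * (0 + (d + 0)) + (1-β)*d) := this
        _ = d := by ring
    exact le_antisymm hle (hd_le u huG (T u) (hTGH huG))
  -- such points are fixed by T ∘ T
  have hfix : ∀ w ∈ G, dist w (T w) = d → T (T w) = w := by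
    intro w hwG hwd
    have hTTd : dist (T (T w)) (T w) = d := by
      have h1 : dist (T w) (T (T w)) ≤ β * dist w (T w) + (1-β)*d :=
        hC w hwG (T w) (hTGH hwG)
      rw [hwd] at h1
      have h2 : d ≤ dist (T (T w)) (T w) := hd_le (T (T w)) (hTHG (hTGH hwG)) (T w) (hTGH hwG)
      rw [dist_comm] at h1
      linarith [le_antisymm (by linarith : dist (T (T w)) (T w) ≤ d) h2]
    have hinfTw : infDist (T w) G = d := by
      refine le_antisymm ?_ (hd_inf (T w) (hTGH hwG))
      have : infDist (T w) G ≤ dist (T w) w := infDist_le_dist_of_mem hwG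
      rw [dist_comm] at this
      linarith [hwd ▸ this]
    have hz1 : Tendsto (fun _ : ℕ => dist w (T w) - infDist (T w) G) atTop (nhds 0) := by
      rw [hwd, hinfTw, sub_self]
      exact tendsto_const_nhds
    have hz2 : Tendsto (fun _ : ℕ => dist (T (T w)) (T w) - infDist (T w) G) atTop (nhds 0) := by
      rw [hTTd, hinfTw, sub_self]
      exact tendsto_const_nhds
    have h3 := hSUC (fun _ => w) (fun _ => T (T w)) (fun _ => T w)
      (fun _ => hwG) (fun _ => hTHG (hTGH hwG)) (fun _ => hTGH hwG) hz1 hz2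
    have h4 : dist w (T (T w)) = 0 := tendsto_nhds_unique tendsto_const_nhds h3
    exact (eq_of_dist_eq_zero h4).symm
  -- uniqueness
  have huniq : ∀ w ∈ G, dist w (T w) = d → w = u := by
    intro w hwG hwd
    have hfw := hfix w hwG hwd
    have hfu := hfix u huG hud
    have hwH := hTGH hwG
    have huH := hTGH huG
    have h1 : dist u (T w) ≤ β * dist w (T u) + (1-β)*d := by
      calc dist u (T w) = dist (T w) (T (T u)) := by rw [hfu, dist_comm]
        _ ≤ β * dist w (T u) + (1-β)*d := hC w hwG (T u) huH
    have h2 : dist w (T u) ≤ β * dist u (T w) + (1-β)*d := by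
      calc dist w (T u) = dist (T u) (T (T w)) := by rw [hfw, dist_comm]
        _ ≤ β * dist u (T w) + (1-β)*d := hC u huG (T w) hwH
    have h3 : d ≤ dist u (T w) := hd_le u huG (T w) hwH
    have h4 : d ≤ dist w (T u) := hd_le w hwG (T u) huH
    have h5 : dist u (T w) = d := by
      nlinarith [mul_le_mul_of_nonneg_left h2 hβ0]
    have hinfTw : infDist (T w) G = d := by
      refine le_antisymm ?_ (hd_inf (T w) hwH)
      have : infDist (T w) G ≤ dist (T w) w := infDist_le_dist_of_mem hwG
      rw [dist_comm] at this
      linarith [hwd ▸ this]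
    have hz1 : Tendsto (fun _ : ℕ => dist u (T w) - infDist (T w) G) atTop (nhds 0) := by
      rw [h5, hinfTw, sub_self]
      exact tendsto_const_nhds
    have hz2 : Tendsto (fun _ : ℕ => dist w (T w) - infDist (T w) G) atTop (nhds 0) := by
      rw [hwd, hinfTw, sub_self]
      exact tendsto_const_nhds
    have h6 := hSUC (fun _ => u) (fun _ => w) (fun _ => T w)
      (fun _ => huG) (fun _ => hwG) (fun _ => hwH) hz1 hz2
    have h7 : dist u w = 0 := tendsto_nhds_unique tendsto_const_nhds h6
    exact (eq_of_dist_eq_zero h7).symm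
  exact ⟨u, ⟨huG, hud⟩, fun w hw => huniq w hw.1 hw.2⟩
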